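/- Let f, g ∈ F(O). Then the pointwise maximum f ∨ g and the pointwise minimum f ∧ g belong to F(O); moreover f ∨ g is a least upper bound of {f, g} in the poset (F(O), ≤) and f ∧ g is a greatest lower bound of {f, g} in (F(O), ≤). Consequently, every finite subset of F(O) has a least upper bound in F(O) and every nonempty finite subset of F(O) has a greatest lower bound in F(O). -/

import Mathlib

open TopologicalSpace

/-- The monoid `F(O)` of finite sums of indicator functions of sets in `O`. -/
def FO {X : Type*} (O : Set (Set X)) : Set (X → ℕ) :=
  {f | ∃ (n : ℕ) (U : Fin n → Set X), (∀ i, U i ∈ O) ∧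
    f = ∑ i, Set.indicator (U i) (1 : X → ℕ)}

section Aux

attribute [local instance] Classical.propDecidable

variable {X : Type*} (O : Set (Set X))

lemma FO_apply {n : ℕ} (U : Fin n → Set X) (x : X) :
    (∑ i, Set.indicator (U i) (1 : X → ℕ)) x
      = (Finset.univ.filter fun i => x ∈ U i).card := by
  rw [Finset.sum_apply, Finset.card_filter]
  simp [Set.indicator_apply]

lemma FO_bound {f : X → ℕ} (hf : f ∈ FO O) : ∃ N : ℕ, ∀ x, f x ≤ N := by
  obtain ⟨n, U, _, rfl⟩ := hf
  refine ⟨n, fun x => ?_⟩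
  rw [FO_apply]
  simpa using Finset.card_filter_le Finset.univ fun i => x ∈ U i

variable (hO_empty : (∅ : Set X) ∈ O)
    (hO_union : ∀ U ∈ O, ∀ V ∈ O, U ∪ V ∈ O)
    (hO_inter : ∀ U ∈ O, ∀ V ∈ O, U ∩ V ∈ O)

include hO_empty hO_union in
lemma biUnion_mem {ι : Type*} [DecidableEq ι] (s : Finset ι) (U : ι → Set X)
    (h : ∀ i ∈ s, U i ∈ O) : (⋃ i ∈ s, U i) ∈ O := by
  induction s using Finset.induction with
  | empty => simpa using hO_empty
  | @insert a s ha ih =>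
    rw [Finset.set_biUnion_insert]
    exact hO_union _ (h a (Finset.mem_insert_self a s)) _
      (ih fun i hi => h i (Finset.mem_insert_of_mem hi))

include hO_inter in
lemma biInter_mem {ι : Type*} [DecidableEq ι] (s : Finset ι) (hs : s.Nonempty) (U : ι → Set X)
    (h : ∀ i ∈ s, U i ∈ O) : (⋂ i ∈ s, U i) ∈ O := by
  induction s using Finset.induction with
  | empty => exact absurd hs (by simp)
  | @insert a s ha ih =>
    rcases s.eq_empty_or_nonempty with rfl | hne
    · simpa using h a (by simp)
    · rw [Finset.set_biInter_insert]
      exact hO_inter _ (h a (Finset.mem_insert_self a s)) _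
        (ih hne fun i hi => h i (Finset.mem_insert_of_mem hi))

include hO_empty hO_union hO_inter in
lemma level_mem {f : X → ℕ} (hf : f ∈ FO O) (k : ℕ) :
    {x | k + 1 ≤ f x} ∈ O := by
  obtain ⟨n, U, hU, rfl⟩ := hf
  have hset : {x | k + 1 ≤ (∑ i, Set.indicator (U i) (1 : X → ℕ)) x}
      = ⋃ S ∈ Finset.univ.powersetCard (k + 1), ⋂ i ∈ S, U i := by
    ext x
    simp only [Set.mem_setOf_eq, FO_apply, Set.mem_iUnion, Finset.mem_powersetCard_univ,
      Set.mem_iInter, exists_prop]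
    constructor
    · intro h
      obtain ⟨t, hts, htc⟩ := Finset.exists_subset_card_eq h
      exact ⟨t, htc, fun i hi => (Finset.mem_filter.mp (hts hi)).2⟩
    · rintro ⟨S, hScard, hSx⟩
      calc k + 1 = S.card := hScard.symm
        _ ≤ _ := Finset.card_le_card fun i hi =>
            Finset.mem_filter.mpr ⟨Finset.mem_univ _, hSx i hi⟩
  rw [hset]
  refine biUnion_mem O hO_empty hO_union _ _ fun S hS => ?_
  refine biInter_mem O hO_inter S ?_ U fun i _ => hU i
  rw [Finset.mem_powersetCard] at hS
  exact Finset.card_pos.mp (by omega)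

lemma sum_ite_level (c N : ℕ) (h : c ≤ N) :
    (∑ k ∈ Finset.range N, if k + 1 ≤ c then 1 else 0) = c := by
  rw [Finset.sum_boole]
  have : (Finset.range N).filter (fun k => k + 1 ≤ c) = Finset.range c := by
    ext k; simp only [Finset.mem_filter, Finset.mem_range]; omega
  rw [this, Finset.card_range]
  simp

lemma mem_FO_of_levels (s : X → ℕ) (N : ℕ) (hb : ∀ x, s x ≤ N)
    (hlev : ∀ k : ℕ, {x | k + 1 ≤ s x} ∈ O) : s ∈ FO O := by
  refine ⟨N, fun i => {x | i.val + 1 ≤ s x}, fun i => hlev i.val, ?_⟩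
  funext x
  rw [FO_apply, Finset.card_filter]
  simp only [Set.mem_setOf_eq]
  calc s x = ∑ k ∈ Finset.range N, if k + 1 ≤ s x then 1 else 0 :=
        (sum_ite_level (s x) N (hb x)).symm
    _ = _ := by
        rw [← Fin.sum_univ_eq_sum_range (fun i => if i + 1 ≤ s x then 1 else 0) N]

end Aux

/-- The pointwise maximum and minimum of `f, g ∈ F(O)` belong to `F(O)` and are the
least upper bound resp. greatest lower bound of `{f, g}` in the poset `(F(O), ≤)`.
Consequently, every finite subset of `F(O)` has a least upper bound in `F(O)`, and
every nonempty finite subset has a greatest lower bound in `F(O)`. -/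
theorem stmt11 {X : Type*} [TopologicalSpace X] (O : Set (Set X))
    (hO_open : ∀ U ∈ O, IsOpen U)
    (hO_empty : (∅ : Set X) ∈ O)
    (hO_union : ∀ U ∈ O, ∀ V ∈ O, U ∪ V ∈ O)
    (hO_inter : ∀ U ∈ O, ∀ V ∈ O, U ∩ V ∈ O)
    (hO_basis : IsTopologicalBasis O) :
    (∀ f ∈ FO O, ∀ g ∈ FO O,
      f ⊔ g ∈ FO O ∧ f ⊓ g ∈ FO O ∧
      (f ≤ f ⊔ g ∧ g ≤ f ⊔ g ∧ ∀ h ∈ FO O, f ≤ h → g ≤ h → f ⊔ g ≤ h) ∧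
      (f ⊓ g ≤ f ∧ f ⊓ g ≤ g ∧ ∀ h ∈ FO O, h ≤ f → h ≤ g → h ≤ f ⊓ g)) ∧
    (∀ A : Finset (X → ℕ), ↑A ⊆ FO O →
      ∃ s ∈ FO O, (∀ f ∈ A, f ≤ s) ∧ ∀ t ∈ FO O, (∀ f ∈ A, f ≤ t) → s ≤ t) ∧
    (∀ A : Finset (X → ℕ), A.Nonempty → ↑A ⊆ FO O →
      ∃ s ∈ FO O, (∀ f ∈ A, s ≤ f) ∧ ∀ t ∈ FO O, (∀ f ∈ A, t ≤ f) → t ≤ s) := by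
  classical
  have sup_mem : ∀ f ∈ FO O, ∀ g ∈ FO O, f ⊔ g ∈ FO O := by
    intro f hf g hg
    obtain ⟨Nf, hNf⟩ := FO_bound O hf
    obtain ⟨Ng, hNg⟩ := FO_bound O hg
    refine mem_FO_of_levels O (f ⊔ g) (Nf + Ng)
      (fun x => by
        simp only [Pi.sup_apply]
        exact sup_le ((hNf x).trans (Nat.le_add_right _ _)) ((hNg x).trans (Nat.le_add_left _ _)))
      (fun k => ?_)
    have : {x | k + 1 ≤ (f ⊔ g) x} = {x | k + 1 ≤ f x} ∪ {x | k + 1 ≤ g x} := by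
      ext x
      simp [Pi.sup_apply, le_sup_iff, Set.mem_union]
    rw [this]
    exact hO_union _ (level_mem O hO_empty hO_union hO_inter hf k) _
      (level_mem O hO_empty hO_union hO_inter hg k)
  have inf_mem : ∀ f ∈ FO O, ∀ g ∈ FO O, f ⊓ g ∈ FO O := by
    intro f hf g hg
    obtain ⟨Nf, hNf⟩ := FO_bound O hf
    refine mem_FO_of_levels O (f ⊓ g) Nf
      (fun x => le_trans inf_le_left (hNf x))
      (fun k => ?_)
    have : {x | k + 1 ≤ (f ⊓ g) x} = {x | k + 1 ≤ f x} ∩ {x | k + 1 ≤ g x} := by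
      ext x
      simp [Pi.inf_apply, le_inf_iff, Set.mem_inter_iff]
    rw [this]
    exact hO_inter _ (level_mem O hO_empty hO_union hO_inter hf k) _
      (level_mem O hO_empty hO_union hO_inter hg k)
  have zero_mem : (0 : X → ℕ) ∈ FO O := ⟨0, Fin.elim0, fun i => i.elim0, by simp⟩
  refine ⟨fun f hf g hg =>
    ⟨sup_mem f hf g hg, inf_mem f hf g hg,
      ⟨le_sup_left, le_sup_right, fun h _ h1 h2 => sup_le h1 h2⟩,
      ⟨inf_le_left, inf_le_right, fun h _ h1 h2 => le_inf h1 h2⟩⟩, ?_, ?_⟩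
  · intro A
    induction A using Finset.induction with
    | empty =>
      exact fun _ => ⟨0, zero_mem, by simp, fun t _ _ => zero_le⟩
    | @insert a A ha ih =>
      intro hA
      have haO : a ∈ FO O := hA (by simp)
      obtain ⟨s, hs, hub, hlub⟩ := ih fun x hx => hA (by simp [hx])
      refine ⟨a ⊔ s, sup_mem a haO s hs, ?_, ?_⟩
      · intro f hf
        rcases Finset.mem_insert.mp hf with rfl | hf
        · exact le_sup_left
        · exact (hub f hf).trans le_sup_right
      · intro t ht hle
        exact sup_le (hle a (Finset.mem_insert_self a A))
          (hlub t ht fun f hf => hle f (Finset.mem_insert_of_mem hf))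
  · intro A
    induction A using Finset.induction with
    | empty => exact fun h _ => absurd h (by simp)
    | @insert a A ha ih =>
      intro _ hA
      have haO : a ∈ FO O := hA (by simp)
      rcases A.eq_empty_or_nonempty with rfl | hne
      · exact ⟨a, haO, by simp, fun t _ hle => hle a (by simp)⟩
      · obtain ⟨s, hs, hlb, hglb⟩ := ih hne fun x hx => hA (by simp [hx])
        refine ⟨a ⊓ s, inf_mem a haO s hs, ?_, ?_⟩
        · intro f hf
          rcases Finset.mem_insert.mp hf with rfl | hf
          · exact inf_le_left
          · exact inf_le_right.trans (hlb f hf)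
        · intro t ht hle
          exact le_inf (hle a (Finset.mem_insert_self a A))
            (hglb t ht fun f hf => hle f (Finset.mem_insert_of_mem hf))
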